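/- Let I = ((x_1 x_2)^{w_1}, ..., (x_{n-1} x_n)^{w_{n-1}}) be the edge ideal of an edge-weighted path with w_{n-1} = 1, and let J = ((x_1x_2)^{w_1},...,(x_{n-2}x_{n-1})^{w_{n-2}}) be the edge ideal of the path with x_n deleted. Then for all t ≥ 2, ((I^t : x_{n-1}) + (x_n)) = ((J^t : x_{n-1}) + (x_n)). -/

import Mathlib

open MvPolynomial

/-- for the edge ideal of an edge-weighted path on `n = m+2` vertices
with last edge weight `1`, and `J` the edge ideal of the path with `x_n` deleted
(edges `e_1,…,e_{n-2}`), we have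
`(I^t : x_{n-1}) + (x_n) = (J^t : x_{n-1}) + (x_n)` for all `t ≥ 2`. -/
theorem path_colon_second_last (K : Type) [Field K] (m : ℕ) (w : Fin (m + 1) → ℕ)
    (hw : ∀ i, 1 ≤ w i) (hlast : w (Fin.last m) = 1) (t : ℕ) (ht : 2 ≤ t)
    (I J : Ideal (MvPolynomial (Fin (m + 2)) K))
    (hI : I = Ideal.span (Set.range fun i : Fin (m + 1) =>
      (X i.castSucc * X i.succ) ^ w i))
    (hJ : J = Ideal.span {p : MvPolynomial (Fin (m + 2)) K |
      ∃ i : Fin (m + 1), (i : ℕ) + 1 ≤ m ∧ p = (X i.castSucc * X i.succ) ^ w i}) :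
    ((I ^ t).colon ((Ideal.span {X ((Fin.last m).castSucc)} : Ideal (MvPolynomial (Fin (m + 2)) K)) : Set (MvPolynomial (Fin (m + 2)) K))) ⊔
        Ideal.span {X (Fin.last (m + 1))} =
      ((J ^ t).colon ((Ideal.span {X ((Fin.last m).castSucc)} : Ideal (MvPolynomial (Fin (m + 2)) K)) : Set (MvPolynomial (Fin (m + 2)) K))) ⊔
        Ideal.span {X (Fin.last (m + 1))} := by
  classical
  set xn : MvPolynomial (Fin (m + 2)) K := X (Fin.last (m + 1)) with hxn
  set y : MvPolynomial (Fin (m + 2)) K := X ((Fin.last m).castSucc) with hy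
  -- substitution x_n ↦ 0
  set φ : MvPolynomial (Fin (m + 2)) K →ₐ[K] MvPolynomial (Fin (m + 2)) K :=
    aeval (fun j : Fin (m + 2) => if j = Fin.last (m + 1) then 0 else X j) with hφ
  have hφX : ∀ j, j ≠ Fin.last (m + 1) → φ (X j) = X j := by
    intro j hj; simp [hφ, hj]
  have hφlast : φ xn = 0 := by simp [hφ, hxn]
  -- index facts
  have hcast : ∀ i : Fin (m + 1), i.castSucc ≠ Fin.last (m + 1) := by
    intro i h
    have := congrArg Fin.val h
    simp [Fin.castSucc, Fin.last] at this
    omega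
  have hsucc : ∀ i : Fin (m + 1), (i : ℕ) + 1 ≤ m → i.succ ≠ Fin.last (m + 1) := by
    intro i hi h
    have := congrArg Fin.val h
    simp [Fin.succ, Fin.last] at this
    omega
  have hφy : φ y = y := hφX _ (hcast _)
  -- f - φ f ∈ (x_n)
  have hsub : ∀ f, f - φ f ∈ Ideal.span {xn} := by
    intro f
    have hcomp : (Ideal.Quotient.mkₐ K (Ideal.span {xn})).comp φ =
        Ideal.Quotient.mkₐ K (Ideal.span {xn}) := by
      apply MvPolynomial.algHom_ext
      intro j
      by_cases hj : j = Fin.last (m + 1)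
      · subst hj
        simp only [AlgHom.comp_apply]
        rw [show X (Fin.last (m+1)) = xn from rfl, hφlast]
        simp only [map_zero]
        symm
        rw [Ideal.Quotient.mkₐ_eq_mk, Ideal.Quotient.eq_zero_iff_mem]
        exact Ideal.mem_span_singleton_self _
      · simp only [AlgHom.comp_apply, hφX j hj]
    have : Ideal.Quotient.mk (Ideal.span {xn}) f =
        Ideal.Quotient.mk (Ideal.span {xn}) (φ f) := by
      have := congrArg (fun ψ => ψ f) hcomp
      simpa using this.symm
    exact (Ideal.Quotient.eq).mp this
  -- φ maps I into J and J into J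
  have hJI : J ≤ I := by
    rw [hI, hJ]
    apply Ideal.span_le.mpr
    rintro p ⟨i, hi, rfl⟩
    exact Ideal.subset_span ⟨i, rfl⟩
  have hφI : Ideal.map φ I ≤ J := by
    rw [hI, Ideal.map_span]
    apply Ideal.span_le.mpr
    rintro p ⟨q, ⟨i, rfl⟩, rfl⟩
    by_cases hi : (i : ℕ) + 1 ≤ m
    · rw [hJ]
      simp only [map_pow, map_mul, hφX _ (hcast i), hφX _ (hsucc i hi)]
      exact Ideal.subset_span ⟨i, hi, rfl⟩
    · have hil : i.succ = Fin.last (m + 1) := by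
        ext
        simp only [Fin.val_succ, Fin.val_last]
        omega
      simp only [map_pow, map_mul, hil]
      rw [show X (Fin.last (m+1)) = xn from rfl, hφlast, mul_zero,
        zero_pow (by have := hw i; omega)]
      exact Ideal.zero_mem _
  have hφJ : Ideal.map φ J ≤ J := by
    rw [hJ, Ideal.map_span]
    apply Ideal.span_le.mpr
    rintro p ⟨q, ⟨i, hi, rfl⟩, rfl⟩
    simp only [map_pow, map_mul, hφX _ (hcast i), hφX _ (hsucc i hi)]
    exact Ideal.subset_span ⟨i, hi, rfl⟩
  have hpow' : ∀ (n : ℕ) (A B : Ideal (MvPolynomial (Fin (m + 2)) K)), A ≤ B → A ^ n ≤ B ^ n := by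
    intro n A B h
    induction n with
    | zero => simp
    | succ k ih => rw [pow_succ, pow_succ]; exact Ideal.mul_mono ih h
  have hpow := hpow' t
  apply le_antisymm
  · apply sup_le _ le_sup_right
    intro f hf
    have hf' : f * y ∈ I ^ t := Ideal.mem_colon_span_singleton.mp hf
    have h1 : φ f * y ∈ J ^ t := by
      have : φ (f * y) ∈ Ideal.map φ (I ^ t) := Ideal.mem_map_of_mem _ hf'
      rw [Ideal.map_pow] at this
      have := hpow _ _ hφI this
      rwa [map_mul, hφy] at this
    have h2 : φ f ∈ (J ^ t).colon ((Ideal.span {y} : Ideal (MvPolynomial (Fin (m + 2)) K)) : Set (MvPolynomial (Fin (m + 2)) K)) := Ideal.mem_colon_span_singleton.mpr h1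
    have : f = φ f + (f - φ f) := by ring
    rw [this]
    exact Ideal.add_mem _ (Ideal.mem_sup_left h2) (Ideal.mem_sup_right (hsub f))
  · apply sup_le _ le_sup_right
    refine le_trans ?_ le_sup_left
    intro f hf
    exact Ideal.mem_colon_span_singleton.mpr (hpow _ _ hJI (Ideal.mem_colon_span_singleton.mp hf))
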